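/- Let Λ : ℝ² → ℝ be C² and nowhere zero (coordinates (u,v)), and let ψ : ℝ → ℝ be C² with ψ′ nowhere zero; regard ψ as the function (u,v) ↦ ψ(v), so that dψ = ψ′(v) dv is an exact one-form that is null with respect to the metric g = Λ du dv. Its metric dual is the vector field X = (2ψ′(v)/Λ(u,v), 0). If X is a conformal Killing field of g, then ∂_u ∂_v (log |Λ|) = 0 identically on ℝ²; equivalently, the metric Λ du dv is flat. -/

import Mathlib

/-- Partial derivative of a function on ℝ² with respect to the `i`-th coordinate. -/
noncomputable def pd (i : Fin 2) (f : ℝ × ℝ → ℝ) (p : ℝ × ℝ) : ℝ :=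
  if i = 0 then deriv (fun u => f (u, p.2)) p.1 else deriv (fun v => f (p.1, v)) p.2

/-- Coordinate Lie derivative of a 2×2 metric `g` along the vector field `X`:
`(L_X g)_{ab} = Σ_c X^c ∂_c g_{ab} + Σ_c g_{cb} ∂_a X^c + Σ_c g_{ac} ∂_b X^c`. -/
noncomputable def lieDeriv (g : Fin 2 → Fin 2 → ℝ × ℝ → ℝ) (X : Fin 2 → ℝ × ℝ → ℝ)
    (a b : Fin 2) (p : ℝ × ℝ) : ℝ :=
  (∑ c, X c p * pd c (g a b) p) + (∑ c, g c b p * pd a (X c) p) +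
    (∑ c, g a c p * pd b (X c) p)

/-- `X` is a conformal Killing field of the metric `g` if `L_X g = ρ · g` for some
function `ρ`. -/
def IsConformalKilling (g : Fin 2 → Fin 2 → ℝ × ℝ → ℝ) (X : Fin 2 → ℝ × ℝ → ℝ) : Prop :=
  ∃ ρ : ℝ × ℝ → ℝ, ∀ a b p, lieDeriv g X a b p = ρ p * g a b p

/-- first Lemma of Appendix B. For the metric `g = Λ du dv`
(`g_{uu} = g_{vv} = 0`, `g_{uv} = Λ/2`) with `Λ` C² and nowhere zero, if the metric
dual `X = (2ψ′(v)/Λ, 0)` of the null exact one-form `dψ = ψ′(v) dv` (with `ψ` C² and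
`ψ′` nowhere zero) is a conformal Killing field, then `∂_u ∂_v log|Λ| = 0`
identically, i.e. the metric is flat. -/
theorem stmt5 (Λ : ℝ × ℝ → ℝ) (hΛ : ContDiff ℝ 2 Λ) (hΛne : ∀ p, Λ p ≠ 0)
    (ψ : ℝ → ℝ) (hψ : ContDiff ℝ 2 ψ) (hψ' : ∀ v, deriv ψ v ≠ 0)
    (hCKV : IsConformalKilling (fun a b p => if a = b then 0 else Λ p / 2)
      ![fun p => 2 * deriv ψ p.2 / Λ p, fun _ => 0]) :
    ∀ p : ℝ × ℝ, pd 0 (pd 1 (fun q => Real.log |Λ q|)) p = 0 := by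
  obtain ⟨ρ, hρ⟩ := hCKV
  have hψ1 : ContDiff ℝ 1 (deriv ψ) := by
    have h2 : ContDiff ℝ ((1:ℕ∞)+1) ψ := by norm_num; exact hψ
    exact (contDiff_succ_iff_deriv.mp h2).2.2
  have hΛd : Differentiable ℝ Λ := hΛ.differentiable (by norm_num)
  -- key: for all p, the v-derivative of X^0 vanishes
  have key : ∀ p : ℝ × ℝ, deriv (fun v => 2 * deriv ψ v / Λ (p.1, v)) p.2 = 0 := by
    intro p
    have h := hρ 1 1 p
    simp [lieDeriv, pd, Fin.sum_univ_two] at h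
    rcases h with h | h
    · exact absurd h (hΛne p)
    · exact h
  -- pointwise: pd 1 (log|Λ|) (u,v) = ψ''(v)/ψ'(v)
  have main : ∀ u v : ℝ, pd 1 (fun q => Real.log |Λ q|) (u, v)
      = deriv (deriv ψ) v / deriv ψ v := by
    intro u v
    have hdΛ : DifferentiableAt ℝ (fun v => Λ (u, v)) v :=
      (hΛd (u, v)).comp v (DifferentiableAt.prodMk (differentiableAt_const u) differentiableAt_id)
    set Λv := deriv (fun v => Λ (u, v)) v with hΛvdef
    have hΛv : HasDerivAt (fun v => Λ (u, v)) Λv v := hdΛ.hasDerivAt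
    have hnum : HasDerivAt (fun v => 2 * deriv ψ v) (2 * deriv (deriv ψ) v) v :=
      ((hψ1.differentiable one_ne_zero v).hasDerivAt).const_mul 2
    have hdiv := hnum.div hΛv (hΛne (u, v))
    have h0 : (2 * deriv (deriv ψ) v * Λ (u, v) - 2 * deriv ψ v * Λv) / Λ (u, v) ^ 2 = 0 := by
      rw [← hdiv.deriv]; exact key (u, v)
    have hΛ0 := hΛne (u, v)
    have heq : deriv (deriv ψ) v * Λ (u, v) = deriv ψ v * Λv := by
      field_simp at h0; linarith
    have hlog : HasDerivAt (fun v => Real.log (Λ (u, v))) (Λv / Λ (u, v)) v :=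
      hΛv.log (hΛne (u, v))
    have : pd 1 (fun q => Real.log |Λ q|) (u, v) = Λv / Λ (u, v) := by
      simp only [pd, if_neg (by decide : ¬(1 : Fin 2) = 0)]
      rw [show (fun v' => Real.log |Λ ((u, v).1, v')|) = fun v' => Real.log (Λ (u, v')) from
        funext fun v' => Real.log_abs _]
      exact hlog.deriv
    rw [this, div_eq_div_iff (hΛne (u, v)) (hψ' v)]
    linarith
  intro p
  have hconst : (fun u => pd 1 (fun q => Real.log |Λ q|) (u, p.2))
      = fun _ => deriv (deriv ψ) p.2 / deriv ψ p.2 := funext fun u => main u p.2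
  have hpd0 : pd 0 (pd 1 (fun q => Real.log |Λ q|)) p
      = deriv (fun u => pd 1 (fun q => Real.log |Λ q|) (u, p.2)) p.1 := if_pos rfl
  rw [hpd0, hconst, deriv_const]
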